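/- If (D, ⊕, ⊗) is a semiring, then conversely every CRA over (D, ⊕, ⊗c) with states Q and registers X is equivalent to a weighted automaton over (D, ⊕, ⊗) with state set (Q × X) ∪ Q; hence the class of functions computed by CRAs over (D, ⊕, ⊗c) equals the class of functions computed by weighted automata over (D, ⊕, ⊗). -/

import Mathlib

/-- A weighted automaton over a semiring `(D, ⊕, ⊗)`, in functional form: initial
weights, final weights, and transition weights (weight `0̄` meaning absence of a
transition). It computes, on input `w`, the `⊕`-sum over all accepting paths on
`w` of the `⊗`-products of initial, transition, and final weights. -/
structure WAF (σ D : Type*) where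
  P : Type
  finP : Fintype P
  ini : P → D
  fin : P → D
  wt : P → σ → P → D

namespace WAF

variable {σ D : Type*} [Semiring D]

/-- The forward vector: `fwd w p` is the `⊕`-sum, over all paths from an initial
state to `p` reading `w`, of the `⊗`-product of the initial weight and the
transition weights along the path. -/
def fwd (W : WAF σ D) (w : List σ) : W.P → D :=
  letI := W.finP
  w.foldl (fun v a p => ∑ p', v p' * W.wt p' a p) W.ini

/-- The value computed by the weighted automaton on input `w`. -/
def val (W : WAF σ D) (w : List σ) : D :=
  letI := W.finP
  ∑ p, W.fwd w p * W.fin p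

end WAF

/-- A (deterministic) cost register automaton over `(D, ⊕, ⊗c)`: registers over
`D` are updated by `⊕`-combinations of terms `x ⊗ c` (registers scaled by
constants) plus a constant; registers may be copied. -/
structure LinCRA (σ D : Type*) where
  Q : Type
  finQ : Fintype Q
  q0 : Q
  X : Type
  finX : Fintype X
  initv : X → D
  δ : Q → σ → Q
  /-- `ρ q a x = (coef, c)` means `x := (⊕_y y ⊗ coef y) ⊕ c`. -/
  ρ : Q → σ → X → (X → D) × D
  μ : Q → (X → D) × D

namespace LinCRA

variable {σ D : Type*} [Semiring D]

/-- Value of a linear update expression under a register valuation. -/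
def evalE (M : LinCRA σ D) (ν : M.X → D) (e : (M.X → D) × D) : D :=
  letI := M.finX
  (∑ x, ν x * e.1 x) + e.2

/-- One step of the machine. -/
def step (M : LinCRA σ D) (cfg : M.Q × (M.X → D)) (a : σ) : M.Q × (M.X → D) :=
  (M.δ cfg.1 a, fun x => M.evalE cfg.2 (M.ρ cfg.1 a x))

/-- The configuration reached on input `w`. -/
def run (M : LinCRA σ D) (w : List σ) : M.Q × (M.X → D) :=
  w.foldl M.step (M.q0, M.initv)

/-- The output of the machine on input `w`. -/
def val (M : LinCRA σ D) (w : List σ) : D :=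
  M.evalE (M.run w).2 (M.μ (M.run w).1)

end LinCRA


namespace LinCRAtoWAF

open scoped Classical

variable {σ D : Type*} [Semiring D]

/-- The weighted automaton associated to a CRA. -/
noncomputable def toWAF (M : LinCRA σ D) : WAF σ D where
  P := (M.Q × M.X) ⊕ M.Q
  finP := letI := M.finQ; letI := M.finX; inferInstance
  ini := Sum.elim (fun qx => if qx.1 = M.q0 then M.initv qx.2 else 0)
                  (fun q => if q = M.q0 then 1 else 0)
  fin := Sum.elim (fun qx => (M.μ qx.1).1 qx.2) (fun q => (M.μ q).2)
  wt := fun p a p' =>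
    match p, p' with
    | .inl (q, x), .inl (q', x') => if q' = M.δ q a then (M.ρ q a x').1 x else 0
    | .inr q, .inl (q', x') => if q' = M.δ q a then (M.ρ q a x').2 else 0
    | .inr q, .inr q' => if q' = M.δ q a then 1 else 0
    | .inl _, .inr _ => 0

/-- Encoding of a CRA configuration as a weight vector. -/
noncomputable def encode (M : LinCRA σ D) (cfg : M.Q × (M.X → D)) : (toWAF M).P → D :=
  Sum.elim (fun qx => if qx.1 = cfg.1 then cfg.2 qx.2 else 0)
           (fun q => if q = cfg.1 then 1 else 0)

theorem sum_ite_aux {α β : Type*} [Fintype α] (b : β) (c : α) (g : α → β)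
    (f : α → D) :
    (∑ x, if b = g x then if x = c then f x else 0 else 0)
      = if b = g c then f c else 0 := by
  rw [Finset.sum_eq_single c]
  · simp
  · intro x _ hx; simp [hx]
  · simp

theorem encode_step (M : LinCRA σ D) (cfg : M.Q × (M.X → D)) (a : σ) :
    letI := (toWAF M).finP
    (fun p => ∑ p', encode M cfg p' * (toWAF M).wt p' a p)
      = encode M (M.step cfg a) := by
  letI := M.finQ; letI := M.finX
  funext p
  have hu : @Finset.univ ((toWAF M).P) (toWAF M).finP
      = @Finset.univ (M.Q × M.X ⊕ M.Q) inferInstance := by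
    congr
  rw [hu]
  rcases p with ⟨q', x'⟩ | q'
  · simp only [toWAF, encode, LinCRA.step, LinCRA.evalE, Fintype.sum_sum_type,
      Fintype.sum_prod_type, Sum.elim_inl, Sum.elim_inr, ite_mul, mul_ite,
      zero_mul, mul_zero, mul_one, one_mul, Finset.sum_ite_eq,
      Finset.sum_ite_eq', Finset.mem_univ, if_true, Finset.sum_const_zero,
      add_zero, zero_add, Finset.sum_ite_irrel]
    rw [sum_ite_aux q' cfg.1 (fun q => M.δ q a)
          (fun q => ∑ x1, cfg.2 x1 * (M.ρ q a x').1 x1),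
        sum_ite_aux q' cfg.1 (fun q => M.δ q a) (fun q => (M.ρ q a x').2)]
    by_cases h : q' = M.δ cfg.1 a <;> simp [h]
  · simp only [toWAF, encode, LinCRA.step, LinCRA.evalE, Fintype.sum_sum_type,
      Fintype.sum_prod_type, Sum.elim_inl, Sum.elim_inr, ite_mul, mul_ite,
      zero_mul, mul_zero, mul_one, one_mul, Finset.sum_ite_eq,
      Finset.sum_ite_eq', Finset.mem_univ, if_true, Finset.sum_const_zero,
      add_zero, zero_add, Finset.sum_ite_irrel]
    rw [sum_ite_aux q' cfg.1 (fun q => M.δ q a) (fun _ => (1 : D))]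
    congr

theorem fwd_eq (M : LinCRA σ D) (w : List σ) :
    (toWAF M).fwd w = encode M (M.run w) := by
  letI := (toWAF M).finP
  unfold WAF.fwd LinCRA.run
  have h0 : (toWAF M).ini = encode M (M.q0, M.initv) := rfl
  rw [h0]
  generalize (M.q0, M.initv) = cfg
  induction w generalizing cfg with
  | nil => rfl
  | cons a w ih => simp only [List.foldl_cons, encode_step M cfg a, ih]

theorem toWAF_val (M : LinCRA σ D) (w : List σ) : (toWAF M).val w = M.val w := by
  letI := M.finQ; letI := M.finX
  unfold WAF.val LinCRA.val
  rw [fwd_eq]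
  have hu : @Finset.univ ((toWAF M).P) (toWAF M).finP
      = @Finset.univ (M.Q × M.X ⊕ M.Q) inferInstance := by
    congr
  rw [hu]
  simp [toWAF, encode, LinCRA.evalE, Fintype.sum_sum_type, Fintype.sum_prod_type,
    ite_mul, zero_mul, Finset.sum_ite_eq, Finset.sum_ite_eq']

/-- The CRA associated to a weighted automaton. -/
def ofWAF (W : WAF σ D) : LinCRA σ D where
  Q := PUnit
  finQ := inferInstance
  q0 := PUnit.unit
  X := W.P
  finX := W.finP
  initv := W.ini
  δ := fun _ _ => PUnit.unit
  ρ := fun _ a x' => (fun x => W.wt x a x', 0)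
  μ := fun _ => (W.fin, 0)

theorem ofWAF_foldl (W : WAF σ D) (w : List σ) : ∀ v : W.P → D,
    letI := W.finP
    (List.foldl (ofWAF W).step (PUnit.unit, v) w).2
      = List.foldl (fun v a p => ∑ p', v p' * W.wt p' a p) v w := by
  letI := W.finP
  induction w with
  | nil => intro v; rfl
  | cons a w ih =>
      intro v
      simp only [List.foldl_cons]
      have hs : (ofWAF W).step (PUnit.unit, v) a
          = (PUnit.unit, fun p => ∑ p', v p' * W.wt p' a p) := by
        unfold LinCRA.step LinCRA.evalE ofWAF
        simp
      rw [hs]; exact ih _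

theorem ofWAF_run (W : WAF σ D) (w : List σ) :
    ((ofWAF W).run w).2 = W.fwd w :=
  ofWAF_foldl W w W.ini

theorem ofWAF_val (W : WAF σ D) (w : List σ) : (ofWAF W).val w = W.val w := by
  letI := W.finP
  unfold LinCRA.val WAF.val LinCRA.evalE
  rw [ofWAF_run]
  simp [ofWAF]
  rfl

end LinCRAtoWAF

/-- Conversely, if `(D, ⊕, ⊗)` is a semiring, every CRA over `(D, ⊕, ⊗c)` with
states `Q` and registers `X` is equivalent to a weighted automaton with state set
`(Q × X) ⊕ Q`; hence the class of functions computed by CRAs over `(D, ⊕, ⊗c)`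
equals the class of functions computed by weighted automata over `(D, ⊕, ⊗)`. -/
theorem LinCRA.to_WAF {σ D : Type*} [Semiring D] :
    (∀ M : LinCRA σ D,
      ∃ (W : WAF σ D) (_ : W.P ≃ ((M.Q × M.X) ⊕ M.Q)),
        ∀ w, W.val w = M.val w) ∧
    ({f : List σ → D | ∃ M : LinCRA σ D, ∀ w, M.val w = f w} =
      {f | ∃ W : WAF σ D, ∀ w, W.val w = f w}) := by
  constructor
  · intro M
    exact ⟨LinCRAtoWAF.toWAF M, Equiv.refl _, LinCRAtoWAF.toWAF_val M⟩
  · ext f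
    constructor
    · rintro ⟨M, hM⟩
      exact ⟨LinCRAtoWAF.toWAF M, fun w => (LinCRAtoWAF.toWAF_val M w).trans (hM w)⟩
    · rintro ⟨W, hW⟩
      exact ⟨LinCRAtoWAF.ofWAF W, fun w => (LinCRAtoWAF.ofWAF_val W w).trans (hW w)⟩
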